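/- Let G be a (P_5, HVN)-free graph containing an induced Y-5-wheel Σ (5-cycle v_1...v_5 plus vertex x adjacent to v_1, v_2, v_4) but no induced T-5-wheel. Let S be the set of vertices with no neighbour in Σ, and suppose |S| ≥ 2 and G[S] is connected. For i ≠ 4 let Y_{i,x} = {u : N_Σ(u) = {v_{i-2}, v_i, v_{i+2}, x}} and Y_4 = {u : N_Σ(u) = {v_2, v_4, v_1}} (indices mod 5). Then every vertex of Y_4 ∪ (⋃_{i≠4} Y_{i,x}) is either complete or anticomplete to S. -/

import Mathlib

open SimpleGraph

/-- The paw: a triangle 0,1,2 plus vertex 3 adjacent only to 0. -/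
def pawGraph : SimpleGraph (Fin 4) :=
  SimpleGraph.fromEdgeSet {s(0,1), s(0,2), s(1,2), s(0,3)}

/-- The HVN: a K₄ on 0,1,2,3 plus vertex 4 adjacent to exactly 0 and 1. -/
def hvnGraph : SimpleGraph (Fin 5) :=
  SimpleGraph.fromEdgeSet {s(0,1), s(0,2), s(0,3), s(1,2), s(1,3), s(2,3), s(4,0), s(4,1)}

/-- The T-5-wheel: 5-cycle 0-1-2-3-4-0 plus vertex 5 adjacent to the three consecutive
vertices 4, 0, 1. -/
def t5WheelGraph : SimpleGraph (Fin 6) :=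
  SimpleGraph.fromEdgeSet {s(0,1), s(1,2), s(2,3), s(3,4), s(4,0), s(5,4), s(5,0), s(5,1)}

/-- The Y-5-wheel: 5-cycle 0-1-2-3-4-0 plus vertex 5 adjacent to 0, 1, 3
(three non-consecutive vertices). -/
def y5WheelGraph : SimpleGraph (Fin 6) :=
  SimpleGraph.fromEdgeSet {s(0,1), s(1,2), s(2,3), s(3,4), s(4,0), s(5,0), s(5,1), s(5,3)}

/-- `G` contains an induced copy of `H`: an injection preserving and reflecting adjacency. -/
def ContainsInduced {V W : Type*} (G : SimpleGraph V) (H : SimpleGraph W) : Prop :=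
  ∃ f : W ↪ V, ∀ a b : W, H.Adj a b ↔ G.Adj (f a) (f b)

/-- `G` is `H`-free: no induced copy of `H`. -/
def InducedFree {V W : Type*} (G : SimpleGraph V) (H : SimpleGraph W) : Prop :=
  ¬ ContainsInduced G H

/-- `v` lists the vertices of an induced (chordless) 5-cycle of `G`, in order. -/
def IsInducedC5 {V : Type*} (G : SimpleGraph V) (v : ZMod 5 → V) : Prop :=
  Function.Injective v ∧ ∀ i j : ZMod 5, G.Adj (v i) (v j) ↔ (j = i + 1 ∨ j = i - 1)

/-- `v`, `x` form an induced Y-5-wheel: `v` is an induced 5-cycle and the extra vertex `x`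
is adjacent to exactly `v 0`, `v 1`, `v 3` (the pattern v₁, v₂, v₄). -/
def IsInducedY5Wheel {V : Type*} (G : SimpleGraph V) (v : ZMod 5 → V) (x : V) : Prop :=
  IsInducedC5 G v ∧ (∀ i, x ≠ v i) ∧
    ∀ i : ZMod 5, G.Adj x (v i) ↔ (i = 0 ∨ i = 1 ∨ i = 3)

/-- The neighbourhood of `u` on the wheel `Σ` with cycle vertices `v i` and hub `x`. -/
def wheelNbhd {V : Type*} (G : SimpleGraph V) (v : ZMod 5 → V) (x : V) (u : V) : Set V :=
  {w | (w = x ∨ ∃ i, w = v i) ∧ G.Adj u w}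

/-- In a (P₅, HVN, T-5-wheel)-free graph with an induced Y-5-wheel Σ, if the set `S` of
vertices with no neighbour in Σ has at least two vertices and induces a connected subgraph,
then every vertex of `Y₄ ∪ ⋃_{i ≠ 4} Y_{i,x}` is complete or anticomplete to `S`. -/
lemma p5_helper {V : Type*} {G : SimpleGraph V} (hP5 : InducedFree G (pathGraph 5))
    (a b c d e : V) (hab : G.Adj a b) (hbc : G.Adj b c) (hcd : G.Adj c d) (hde : G.Adj d e)
    (hac : ¬G.Adj a c) (had : ¬G.Adj a d) (hae : ¬G.Adj a e)
    (hbd : ¬G.Adj b d) (hbe : ¬G.Adj b e) (hce : ¬G.Adj c e) : False := by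
  have nab : a ≠ b := G.ne_of_adj hab
  have nbc : b ≠ c := G.ne_of_adj hbc
  have ncd : c ≠ d := G.ne_of_adj hcd
  have nde : d ≠ e := G.ne_of_adj hde
  have nac : a ≠ c := fun h => by subst h; exact had hcd
  have nad : a ≠ d := fun h => by subst h; exact hae hde
  have nae : a ≠ e := fun h => by subst h; exact had hde.symm
  have nbd : b ≠ d := fun h => by subst h; exact hbe hde
  have nbe : b ≠ e := fun h => by subst h; exact hbd hde.symm
  have nce : c ≠ e := fun h => by subst h; exact hbe hbc
  have hba := hab.symm; have hcb := hbc.symm; have hdc := hcd.symm; have hed := hde.symm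
  have hca : ¬G.Adj c a := fun h => hac h.symm
  have hda : ¬G.Adj d a := fun h => had h.symm
  have hea : ¬G.Adj e a := fun h => hae h.symm
  have hdb : ¬G.Adj d b := fun h => hbd h.symm
  have heb : ¬G.Adj e b := fun h => hbe h.symm
  have hec : ¬G.Adj e c := fun h => hce h.symm
  have hirr : ∀ w : V, ¬ G.Adj w w := fun w => G.irrefl
  apply hP5
  refine ⟨⟨![a,b,c,d,e], ?_⟩, ?_⟩
  · intro i j hij
    fin_cases i <;> fin_cases j <;> simp_all
  · intro i j
    show (pathGraph 5).Adj i j ↔ G.Adj (![a,b,c,d,e] i) (![a,b,c,d,e] j)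
    fin_cases i <;> fin_cases j <;>
      simp only [Matrix.cons_val_zero, Matrix.cons_val_one, Matrix.head_cons,
        Matrix.cons_val_fin_one] <;>
      rw [pathGraph_adj] <;> simp_all

theorem y_complete_or_anticomplete {V : Type*} (G : SimpleGraph V)
    (hP5 : InducedFree G (pathGraph 5)) (hHVN : InducedFree G hvnGraph)
    (hT5 : InducedFree G t5WheelGraph)
    (v : ZMod 5 → V) (x : V) (hW : IsInducedY5Wheel G v x)
    (S : Set V) (hS : S = {u : V | wheelNbhd G v x u = (∅ : Set V)})
    (hS2 : S.Nontrivial) (hSconn : (G.induce S).Connected) :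
    ∀ u, (wheelNbhd G v x u = {v 1, v 3, v 0} ∨
          ∃ i : ZMod 5, i ≠ 3 ∧
            wheelNbhd G v x u = {v (i - 2), v i, v (i + 2), x}) →
      (∀ s ∈ S, G.Adj u s) ∨ (∀ s ∈ S, ¬ G.Adj u s) := by
  have hinj : Function.Injective v := hW.1.1
  have hcyc : ∀ i j : ZMod 5, G.Adj (v i) (v j) ↔ (j = i + 1 ∨ j = i - 1) := hW.1.2
  have hSfact : ∀ w ∈ S, ∀ j, ¬ G.Adj w (v j) := by
    intro w hw j hadj
    rw [hS, Set.mem_setOf_eq] at hw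
    have : v j ∈ wheelNbhd G v x w := ⟨Or.inr ⟨j, rfl⟩, hadj⟩
    rw [hw] at this
    exact this
  intro u hu
  by_contra hcon
  push_neg at hcon
  obtain ⟨⟨t₀, ht₀S, ht₀⟩, s₀, hs₀S, hs₀⟩ := hcon
  obtain ⟨p⟩ := hSconn.preconnected ⟨s₀, hs₀S⟩ ⟨t₀, ht₀S⟩
  obtain ⟨d, _, hdfst, hdsnd⟩ :=
    p.exists_boundary_dart {w : ↥S | G.Adj u ↑w} hs₀ ht₀
  have hst : G.Adj (↑d.fst : V) (↑d.snd : V) := d.adj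
  set s : V := ↑d.fst with hs_def
  set t : V := ↑d.snd with ht_def
  have hsS : s ∈ S := d.fst.2
  have htS : t ∈ S := d.snd.2
  have hus : G.Adj u s := hdfst
  have hnut : ¬ G.Adj u t := hdsnd
  rcases hu with h | ⟨i, _, h⟩
  · -- Y₄ case: N_Σ(u) = {v1, v3, v0}
    have hu3 : G.Adj u (v 3) := by
      have h3 : v 3 ∈ wheelNbhd G v x u := by
        rw [h]; simp
      exact h3.2
    have hnu2 : ¬ G.Adj u (v 2) := by
      intro hadj
      have h2 : v 2 ∈ ({v 1, v 3, v 0} : Set V) := by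
        rw [← h]; exact ⟨Or.inr ⟨2, rfl⟩, hadj⟩
      simp only [Set.mem_insert_iff, Set.mem_singleton_iff] at h2
      rcases h2 with h2 | h2 | h2 <;> exact absurd (hinj h2) (by decide)
    exact p5_helper hP5 t s u (v 3) (v 2) hst.symm hus.symm hu3
      ((hcyc 3 2).2 (Or.inr (by decide)))
      (fun hh => hnut hh.symm) (hSfact t htS 3) (hSfact t htS 2)
      (hSfact s hsS 3) (hSfact s hsS 2) hnu2
  · -- Y_{i,x} case
    have hui : G.Adj u (v i) := by
      have h3 : v i ∈ wheelNbhd G v x u := by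
        rw [h]; simp
      exact h3.2
    have hnu1 : ¬ G.Adj u (v (i + 1)) := by
      intro hadj
      have h2 : v (i + 1) ∈ ({v (i - 2), v i, v (i + 2), x} : Set V) := by
        rw [← h]; exact ⟨Or.inr ⟨i + 1, rfl⟩, hadj⟩
      simp only [Set.mem_insert_iff, Set.mem_singleton_iff] at h2
      rcases h2 with h2 | h2 | h2 | h2
      · have heq := hinj h2
        have h5 : (i + 1) - i = (i - 2) - i := by rw [heq]
        rw [add_sub_cancel_left, sub_sub_cancel_left] at h5
        exact absurd h5 (by decide)
      · have heq := hinj h2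
        have h5 : (i + 1) - i = i - i := by rw [heq]
        rw [add_sub_cancel_left, sub_self] at h5
        exact absurd h5 (by decide)
      · have heq := hinj h2
        have h5 : (i + 1) - i = (i + 2) - i := by rw [heq]
        rw [add_sub_cancel_left, add_sub_cancel_left] at h5
        exact absurd h5 (by decide)
      · exact hW.2.1 (i + 1) h2.symm
    exact p5_helper hP5 t s u (v i) (v (i + 1)) hst.symm hus.symm hui
      ((hcyc i (i + 1)).2 (Or.inl rfl))
      (fun hh => hnut hh.symm) (hSfact t htS i) (hSfact t htS (i + 1))
      (hSfact s hsS i) (hSfact s hsS (i + 1)) hnu1
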